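/- CDF of the skew-normal distribution: if Y ∼ SN_p(μ, Σ, λ) (i.e., ESN with τ = 0), then for any y ∈ ℝ^p, P(Y ≤ y) = 2 Φ_{p+1}((yᵀ, 0)ᵀ; μ*, Ω), with μ* = (μᵀ, 0)ᵀ and Ω the block matrix [Σ, -Δ; -Δᵀ, 1], Δ = Σ^{1/2} λ / √(1+λᵀλ). -/

import Mathlib

open MeasureTheory Real Matrix Filter

/-- Standard normal cdf Φ. -/
noncomputable def stdCDF (t : ℝ) : ℝ :=
  ∫ x in Set.Iic t, ProbabilityTheory.gaussianPDFReal 0 1 x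

/-- Univariate normal density with mean `m` and variance `v`. -/
noncomputable def normPDF (m v x : ℝ) : ℝ :=
  (Real.sqrt (2 * π * v))⁻¹ * Real.exp (-((x - m) ^ 2 / (2 * v)))

/-- Multivariate normal density with mean `μ` and covariance `S`. -/
noncomputable def mvnPDF {n : Type*} [Fintype n] [DecidableEq n] (μ : n → ℝ) (S : Matrix n n ℝ)
    (x : n → ℝ) : ℝ :=
  (2 * π) ^ (-(Fintype.card n : ℝ) / 2) * S.det ^ (-(1 : ℝ) / 2) *
    Real.exp (-(dotProduct (x - μ) (S⁻¹ *ᵥ (x - μ))) / 2)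

/-- The square root `PosSemidef.sqrt` of the older Mathlib, spelled out. -/
noncomputable def psdSqrt {n : Type*} [Fintype n] [DecidableEq n] {A : Matrix n n ℝ}
    (hA : A.PosSemidef) : Matrix n n ℝ :=
  (hA.1.eigenvectorUnitary : Matrix n n ℝ) * diagonal ((√·) ∘ hA.1.eigenvalues) *
    (star hA.1.eigenvectorUnitary : Matrix n n ℝ)

/-- Extended skew-normal density. -/
noncomputable def esnPDF {n : Type*} [Fintype n] [DecidableEq n] (μ : n → ℝ)
    (S : Matrix n n ℝ) (hS : S.PosDef) (l : n → ℝ) (τ : ℝ) (y : n → ℝ) : ℝ :=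
  (stdCDF (τ / Real.sqrt (1 + dotProduct l l)))⁻¹ * mvnPDF μ S y *
    stdCDF (τ + dotProduct l ((psdSqrt hS.posSemidef)⁻¹ *ᵥ (y - μ)))


open ProbabilityTheory
open scoped NNReal ENNReal

section Helpers

lemma psdSqrt_mul_self {n : Type*} [Fintype n] [DecidableEq n] {A : Matrix n n ℝ}
    (hA : A.PosSemidef) : psdSqrt hA * psdSqrt hA = A := by
  have hU : (star hA.1.eigenvectorUnitary : Matrix n n ℝ) * (hA.1.eigenvectorUnitary : Matrix n n ℝ) = 1 :=
    Unitary.coe_star_mul_self _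
  conv_rhs => rw [hA.1.spectral_theorem, Unitary.conjStarAlgAut_apply]
  unfold psdSqrt
  simp only [Matrix.mul_assoc]
  rw [← Matrix.mul_assoc (star _ : Matrix n n ℝ) _ , hU, Matrix.one_mul,
    ← Matrix.mul_assoc (diagonal _) (diagonal _), diagonal_mul_diagonal]
  congr 2
  congr 1
  funext i
  simp [Real.mul_self_sqrt (hA.eigenvalues_nonneg i)]

lemma psdSqrt_transpose {n : Type*} [Fintype n] [DecidableEq n] {A : Matrix n n ℝ}
    (hA : A.PosSemidef) : (psdSqrt hA)ᵀ = psdSqrt hA := by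
  unfold psdSqrt
  rw [Matrix.star_eq_conjTranspose, conjTranspose_eq_transpose_of_trivial]
  simp [Matrix.transpose_mul, Matrix.mul_assoc]


lemma stdCDF_nonneg (t : ℝ) : 0 ≤ stdCDF t :=
  integral_nonneg fun x => gaussianPDFReal_nonneg 0 1 x

lemma stdCDF_mono : Monotone stdCDF := by
  intro s t hst
  exact setIntegral_mono_set (integrable_gaussianPDFReal 0 1).integrableOn
    (ae_of_all _ fun x => gaussianPDFReal_nonneg 0 1 x)
    (HasSubset.Subset.eventuallyLE (Set.Iic_subset_Iic.mpr hst))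

lemma stdCDF_measurable : Measurable stdCDF := stdCDF_mono.measurable

lemma stdCDF_zero : stdCDF 0 = 2⁻¹ := by
  have h1 : ∫ x, gaussianPDFReal 0 1 x = 1 := integral_gaussianPDFReal_eq_one 0 one_ne_zero
  have hint : Integrable (gaussianPDFReal 0 1) := integrable_gaussianPDFReal 0 1
  have heven : ∀ x : ℝ, gaussianPDFReal 0 1 (-x) = gaussianPDFReal 0 1 x := by
    intro x; simp [gaussianPDFReal, neg_sq]
  have hsym : stdCDF 0 = ∫ x in Set.Ioi (0:ℝ), gaussianPDFReal 0 1 x := by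
    unfold stdCDF
    rw [show (0:ℝ) = -0 by ring, ← integral_comp_neg_Iic]
    simp only [heven, neg_zero]
  have hsum : stdCDF 0 + ∫ x in Set.Ioi (0:ℝ), gaussianPDFReal 0 1 x = 1 := by
    unfold stdCDF
    rw [← setIntegral_union (Set.Iic_disjoint_Ioi le_rfl) measurableSet_Ioi
      hint.integrableOn hint.integrableOn, Set.Iic_union_Ioi, ← h1]
    simp [Measure.restrict_univ]
  rw [← hsym] at hsum
  linarith

lemma lintegral_Iic_zero_gaussian (m : ℝ) (v : ℝ≥0) (hv : v ≠ 0) :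
    ∫⁻ t in Set.Iic (0:ℝ), gaussianPDF m v t = ENNReal.ofReal (stdCDF (-m / Real.sqrt v)) := by
  have hvpos : (0:ℝ) < v := lt_of_le_of_ne v.coe_nonneg (by exact_mod_cast hv.symm)
  have hsv : (0:ℝ) < Real.sqrt v := Real.sqrt_pos.mpr hvpos
  have hmap1 : (gaussianReal 0 1).map (fun x => Real.sqrt v * x) = gaussianReal 0 v := by
    have := gaussianReal_map_const_mul (μ := 0) (v := 1) (Real.sqrt v)
    simp only [mul_zero, mul_one] at this
    convert this using 3
    ext
    simp [Real.sq_sqrt v.coe_nonneg]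
  have hmap2 : (gaussianReal 0 v).map (· + m) = gaussianReal m v := by
    simpa using gaussianReal_map_add_const (μ := 0) (v := v) m
  have hmap : (gaussianReal 0 1).map (fun x => Real.sqrt v * x + m) = gaussianReal m v := by
    rw [← hmap2, ← hmap1, Measure.map_map (by fun_prop) (by fun_prop)]
    rfl
  have hLHS : ∫⁻ t in Set.Iic (0:ℝ), gaussianPDF m v t = (gaussianReal m v) (Set.Iic 0) := by
    rw [gaussianReal_of_var_ne_zero _ hv, withDensity_apply _ measurableSet_Iic]
  have hpre : (fun x => Real.sqrt v * x + m) ⁻¹' (Set.Iic 0) = Set.Iic (-m / Real.sqrt v) := by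
    ext x
    simp only [Set.mem_preimage, Set.mem_Iic]
    rw [le_div_iff₀ hsv]
    constructor <;> intro h <;> nlinarith
  rw [hLHS, ← hmap, Measure.map_apply (by fun_prop) measurableSet_Iic, hpre,
    gaussianReal_of_var_ne_zero _ one_ne_zero, withDensity_apply _ measurableSet_Iic]
  unfold stdCDF
  simp_rw [gaussianPDF]
  rw [← ofReal_integral_eq_lintegral_ofReal (integrable_gaussianPDFReal 0 1).integrableOn
    (ae_of_all _ fun x => gaussianPDFReal_nonneg 0 1 x)]

lemma dot_self_nonneg' {n : Type*} [Fintype n] (l : n → ℝ) : 0 ≤ l ⬝ᵥ l :=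
  Finset.sum_nonneg fun i _ => mul_self_nonneg _

lemma mvnPDF_nonneg {n : Type*} [Fintype n] [DecidableEq n] (μ : n → ℝ) (S : Matrix n n ℝ)
    (hdet : 0 ≤ S.det) (x : n → ℝ) : 0 ≤ mvnPDF μ S x := by
  unfold mvnPDF
  have h1 : (0:ℝ) ≤ (2 * π) ^ (-(Fintype.card n : ℝ) / 2) :=
    Real.rpow_nonneg (by positivity) _
  have h2 : (0:ℝ) ≤ S.det ^ (-(1:ℝ) / 2) := Real.rpow_nonneg hdet _
  positivity

lemma mvnPDF_measurable {n : Type*} [Fintype n] [DecidableEq n] (μ : n → ℝ)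
    (S : Matrix n n ℝ) : Measurable (mvnPDF μ S) := by
  unfold mvnPDF
  have hQ : Measurable fun z : n → ℝ => (z - μ) ⬝ᵥ (S⁻¹ *ᵥ (z - μ)) := by
    simp only [dotProduct, Matrix.mulVec, Pi.sub_apply]
    exact Finset.measurable_sum _ fun i _ =>
      ((measurable_pi_apply i).sub measurable_const).mul
        (Finset.measurable_sum _ fun j _ =>
          measurable_const.mul ((measurable_pi_apply j).sub measurable_const))
  exact measurable_const.mul (Real.measurable_exp.comp ((hQ.neg).div_const 2))

lemma sn_density_eq {p : ℕ} (μ : Fin p → ℝ) (S : Matrix (Fin p) (Fin p) ℝ) (hS : S.PosDef)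
    (l Δ : Fin p → ℝ) (hΔ : Δ = (Real.sqrt (1 + l ⬝ᵥ l))⁻¹ • (psdSqrt hS.posSemidef *ᵥ l))
    (Ωmat : Matrix (Fin p ⊕ Unit) (Fin p ⊕ Unit) ℝ)
    (hΩ : Ωmat = Matrix.fromBlocks S (Matrix.of fun i (_ : Unit) => -Δ i)
      (Matrix.of fun (_ : Unit) j => -Δ j) 1)
    (x : Fin p → ℝ) (t : ℝ) :
    mvnPDF (Sum.elim μ fun _ => (0:ℝ)) Ωmat (Sum.elim x fun _ => t) =
      mvnPDF μ S x *
        ProbabilityTheory.gaussianPDFReal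
          (-((Real.sqrt (1 + l ⬝ᵥ l))⁻¹ * (l ⬝ᵥ ((psdSqrt hS.posSemidef)⁻¹ *ᵥ (x - μ)))))
          ⟨(1 + l ⬝ᵥ l)⁻¹, inv_nonneg.mpr (add_nonneg zero_le_one (dot_self_nonneg' l))⟩ t := by
  set R := psdSqrt hS.posSemidef with hRdef
  set c : ℝ := 1 + l ⬝ᵥ l with hcdef
  have hc : (0:ℝ) < c := lt_of_lt_of_le one_pos (le_add_of_nonneg_right (dot_self_nonneg' l))
  have hsc : (0:ℝ) < Real.sqrt c := Real.sqrt_pos.mpr hc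
  have hscsq : Real.sqrt c * Real.sqrt c = c := Real.mul_self_sqrt hc.le
  have hRR : R * R = S := psdSqrt_mul_self hS.posSemidef
  have hSdet : IsUnit S.det := isUnit_iff_ne_zero.mpr hS.det_pos.ne'
  have hRdet : IsUnit R.det := by
    have : R.det * R.det = S.det := by rw [← Matrix.det_mul, hRR]
    rcases mul_ne_zero_iff.mp (this ▸ hS.det_pos.ne') with ⟨h, _⟩
    exact isUnit_iff_ne_zero.mpr h
  have hRRinv : R * R⁻¹ = 1 := Matrix.mul_nonsing_inv _ hRdet
  have hRinvR : R⁻¹ * R = 1 := Matrix.nonsing_inv_mul _ hRdet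
  have hRsym : Rᵀ = R := by
    exact psdSqrt_transpose hS.posSemidef
  have hRinvsym : (R⁻¹)ᵀ = R⁻¹ := by rw [Matrix.transpose_nonsing_inv, hRsym]
  clear_value R
  have hSinv : S⁻¹ = R⁻¹ * R⁻¹ := by rw [← hRR, Matrix.mul_inv_rev]
  have hSsym : Sᵀ = S := by rw [← hRR, Matrix.transpose_mul, hRsym]
  have hSinvsym : (S⁻¹)ᵀ = S⁻¹ := by rw [Matrix.transpose_nonsing_inv, hSsym]
  set w : Fin p → ℝ := (Real.sqrt c)⁻¹ • (R⁻¹ *ᵥ l) with hwdef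
  have hΔ' : Δ = (Real.sqrt c)⁻¹ • (R *ᵥ l) := hΔ
  -- transport dot products through symmetric matrices
  have hdotA : ∀ (A : Matrix (Fin p) (Fin p) ℝ) (hA : Aᵀ = A) (v u : Fin p → ℝ),
      (A *ᵥ v) ⬝ᵥ u = v ⬝ᵥ (A *ᵥ u) := by
    intro A hA v u
    rw [dotProduct_comm, Matrix.dotProduct_mulVec, ← Matrix.mulVec_transpose, hA,
      dotProduct_comm]
  have hSw : S *ᵥ w = Δ := by
    rw [hwdef, hΔ', Matrix.mulVec_smul]
    congr 1
    rw [Matrix.mulVec_mulVec, ← hRR, Matrix.mul_assoc, hRRinv, Matrix.mul_one]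
  have hSinvΔ : S⁻¹ *ᵥ Δ = w := by
    rw [hwdef, hΔ', Matrix.mulVec_smul]
    congr 1
    rw [Matrix.mulVec_mulVec, hSinv, Matrix.mul_assoc, hRinvR, Matrix.mul_one]
  have hΔdotw : Δ ⬝ᵥ w = c⁻¹ * (l ⬝ᵥ l) := by
    rw [hΔ', hwdef, smul_dotProduct, dotProduct_smul, smul_eq_mul, smul_eq_mul,
      hdotA R hRsym, Matrix.mulVec_mulVec, hRRinv, Matrix.one_mulVec]
    rw [← mul_assoc, ← Real.sqrt_inv, Real.mul_self_sqrt (inv_nonneg.mpr hc.le)]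
  set u : Fin p → ℝ := x - μ with hudef
  have hwdotu : w ⬝ᵥ u = (Real.sqrt c)⁻¹ * (l ⬝ᵥ (R⁻¹ *ᵥ u)) := by
    rw [hwdef, smul_dotProduct, smul_eq_mul, hdotA R⁻¹ hRinvsym]
  -- determinant
  haveI : Invertible S := S.invertibleOfIsUnitDet hSdet
  have hdet : Ωmat.det = S.det * c⁻¹ := by
    rw [hΩ, Matrix.det_fromBlocks₁₁]
    have hCB : ((Matrix.of fun (_ : Unit) j => -Δ j) * ⅟S *
        (Matrix.of fun i (_ : Unit) => -Δ i)) default default = Δ ⬝ᵥ (S⁻¹ *ᵥ Δ) := by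
      rw [Matrix.mul_assoc, invOf_eq_nonsing_inv]
      simp only [Matrix.mul_apply, Matrix.of_apply, Matrix.mulVec, dotProduct,
        Finset.mul_sum, neg_mul, mul_neg, neg_neg]
    congr 1
    rw [Matrix.det_unique, Matrix.sub_apply, hCB, Matrix.one_apply_eq, hSinvΔ, hΔdotw]
    have : 1 - c⁻¹ * (l ⬝ᵥ l) = c⁻¹ := by
      field_simp
      rw [hcdef]; ring
    rw [this]
  have hΩdet : IsUnit Ωmat.det := by
    rw [hdet]
    exact isUnit_iff_ne_zero.mpr (mul_ne_zero hS.det_pos.ne' (inv_ne_zero hc.ne'))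
  -- inverse quadratic form
  set k : ℝ := c * (t + w ⬝ᵥ u) with hkdef
  set q : Fin p ⊕ Unit → ℝ := Sum.elim (S⁻¹ *ᵥ u + k • w) (fun _ => k) with hqdef
  have hz : Sum.elim x (fun _ : Unit => t) - Sum.elim μ (fun _ : Unit => (0:ℝ)) = Sum.elim u (fun _ : Unit => t) := by
    funext j; cases j <;> simp [hudef]
  have hΩq : Ωmat *ᵥ q = Sum.elim u (fun _ : Unit => t) := by
    rw [hΩ, hqdef, Matrix.fromBlocks_mulVec, Sum.elim_comp_inl, Sum.elim_comp_inr]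
    have h1 : (Matrix.of fun i (_ : Unit) => -Δ i) *ᵥ (fun _ => k) = -(k • Δ) := by
      funext i
      simp only [Matrix.mulVec, dotProduct, Matrix.of_apply, Finset.univ_unique,
        Finset.sum_singleton, Pi.neg_apply, Pi.smul_apply, smul_eq_mul]
      ring
    have h1' : S *ᵥ (S⁻¹ *ᵥ u + k • w) = u + k • Δ := by
      rw [Matrix.mulVec_add, Matrix.mulVec_smul, Matrix.mulVec_mulVec,
        Matrix.mul_nonsing_inv _ hSdet, Matrix.one_mulVec, hSw]
    have h2' : (Matrix.of fun (_ : Unit) j => -Δ j) *ᵥ (S⁻¹ *ᵥ u + k • w)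
        + (1 : Matrix Unit Unit ℝ) *ᵥ (fun _ => k) = fun _ : Unit => t := by
      funext j
      have h2 : ((Matrix.of fun (_ : Unit) j => -Δ j) *ᵥ (S⁻¹ *ᵥ u + k • w)) j
          = -(Δ ⬝ᵥ (S⁻¹ *ᵥ u + k • w)) := by
        simp only [Matrix.mulVec, dotProduct, Matrix.of_apply, neg_mul, ← Finset.sum_neg_distrib]
      have h3 : ((1 : Matrix Unit Unit ℝ) *ᵥ fun _ => k) j = k := by
        rw [Matrix.one_mulVec]
      rw [Pi.add_apply, h2, h3]
      rw [dotProduct_add, dotProduct_smul, smul_eq_mul, hΔdotw]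
      have h4 : Δ ⬝ᵥ (S⁻¹ *ᵥ u) = w ⬝ᵥ u := by
        rw [← hdotA S⁻¹ hSinvsym, hSinvΔ]
      rw [h4, hkdef]
      have h7 : c * (t + w ⬝ᵥ u) * (c⁻¹ * (l ⬝ᵥ l)) = (l ⬝ᵥ l) * (t + w ⬝ᵥ u) := by
        field_simp
      rw [h7, hcdef]
      ring
    rw [h1, h1', h2']
    congr 1
    rw [add_neg_cancel_right]
  have hΩinvq : Ωmat⁻¹ *ᵥ (Sum.elim u fun _ : Unit => t) = q := by
    rw [← hΩq, Matrix.mulVec_mulVec, Matrix.nonsing_inv_mul _ hΩdet, Matrix.one_mulVec]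
  have hQ : (Sum.elim u fun _ : Unit => t) ⬝ᵥ (Ωmat⁻¹ *ᵥ (Sum.elim u fun _ : Unit => t))
      = u ⬝ᵥ (S⁻¹ *ᵥ u) + c * (t + w ⬝ᵥ u)^2 := by
    rw [hΩinvq, hqdef]
    have : (Sum.elim u fun _ : Unit => t) ⬝ᵥ (Sum.elim (S⁻¹ *ᵥ u + k • w) fun _ : Unit => k)
        = u ⬝ᵥ (S⁻¹ *ᵥ u + k • w) + t * k := by
      simp only [dotProduct, Fintype.sum_sum_type, Sum.elim_inl, Sum.elim_inr,
        Finset.univ_unique, Finset.sum_singleton]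
    rw [this, dotProduct_add, dotProduct_smul, smul_eq_mul, hkdef]
    have hcomm : u ⬝ᵥ w = w ⬝ᵥ u := dotProduct_comm u w
    rw [hcomm]; ring
  -- now assemble
  unfold mvnPDF gaussianPDFReal
  rw [hz, hQ, hdet]
  have hcard : (Fintype.card (Fin p ⊕ Unit) : ℝ) = (p : ℝ) + 1 := by
    simp [Fintype.card_sum]
  have hcardp : (Fintype.card (Fin p) : ℝ) = (p : ℝ) := by simp
  rw [hcard, hcardp]
  have hm : t - -((Real.sqrt (1 + l ⬝ᵥ l))⁻¹ * (l ⬝ᵥ ((R)⁻¹ *ᵥ (x - μ)))) = t + w ⬝ᵥ u := by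
    rw [hwdotu]; rw [← hudef, ← hcdef]; ring
  rw [hm]
  -- constants
  have h2pi : (0:ℝ) < 2 * π := by positivity
  have hsplit1 : (2 * π : ℝ) ^ (-((p:ℝ) + 1) / 2) =
      (2 * π) ^ (-(p:ℝ) / 2) * (2 * π) ^ (-(1:ℝ) / 2) := by
    rw [← Real.rpow_add h2pi]; ring_nf
  have hsplit2 : (S.det * c⁻¹) ^ (-(1:ℝ) / 2) =
      S.det ^ (-(1:ℝ)/2) * (c⁻¹) ^ (-(1:ℝ)/2) := by
    rw [Real.mul_rpow hS.det_pos.le (inv_nonneg.mpr hc.le)]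
  have hsqrtinv : (Real.sqrt (2 * π * c⁻¹))⁻¹ = (2*π) ^ (-(1:ℝ)/2) * (c⁻¹) ^ (-(1:ℝ)/2) := by
    rw [Real.sqrt_eq_rpow, ← Real.rpow_neg (by positivity),
      Real.mul_rpow h2pi.le (inv_nonneg.mpr hc.le)]
    norm_num
  have hexp : Real.exp (-(u ⬝ᵥ (S⁻¹ *ᵥ u) + c * (t + w ⬝ᵥ u)^2) / 2) =
      Real.exp (-(u ⬝ᵥ (S⁻¹ *ᵥ u)) / 2) * Real.exp (-(t + w ⬝ᵥ u)^2 / (2 * c⁻¹)) := by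
    rw [← Real.exp_add]
    congr 1
    have : (2:ℝ) * c⁻¹ ≠ 0 := by positivity
    field_simp
    ring
  change _ = _ * ((√(2 * π * c⁻¹))⁻¹ * rexp (-(t + w ⬝ᵥ u) ^ 2 / (2 * c⁻¹)))
  rw [hsplit1, hsplit2, hsqrtinv, hexp]
  ring

noncomputable def glueE (p : ℕ) : ((Fin p → ℝ) × ℝ) ≃ᵐ ((Fin p ⊕ Unit) → ℝ) :=
  ((MeasurableEquiv.refl (Fin p → ℝ)).prodCongr (MeasurableEquiv.funUnique Unit ℝ).symm).trans
    (MeasurableEquiv.sumPiEquivProdPi (fun _ : Fin p ⊕ Unit => ℝ)).symm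

lemma glueE_apply (p : ℕ) (x : Fin p → ℝ) (t : ℝ) :
    glueE p (x, t) = Sum.elim x (fun _ : Unit => t) := by
  funext j
  cases j <;> rfl

lemma glueE_mp (p : ℕ) : MeasurePreserving (glueE p) volume volume := by
  have h1 : MeasurePreserving
      (MeasurableEquiv.sumPiEquivProdPi (fun _ : Fin p ⊕ Unit => ℝ)).symm volume volume :=
    volume_measurePreserving_sumPiEquivProdPi_symm _
  have h2 : MeasurePreserving
      ((MeasurableEquiv.refl (Fin p → ℝ)).prodCongr (MeasurableEquiv.funUnique Unit ℝ).symm)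
      volume volume := by
    have hfu : MeasurePreserving (MeasurableEquiv.funUnique Unit ℝ).symm volume volume :=
      (measurePreserving_funUnique volume Unit).symm _
    exact (MeasurePreserving.id volume).prod hfu
  exact h1.comp h2

end Helpers

/-- cdf of the skew-normal distribution (`τ = 0` case of the ESN):
`P(Y ≤ y) = 2 Φ_{p+1}((yᵀ, 0)ᵀ; μ*, Ω)`. -/
theorem sn_cdf {p : ℕ} (μ : Fin p → ℝ) (S : Matrix (Fin p) (Fin p) ℝ)
    (hS : S.PosDef) (l : Fin p → ℝ)
    {α : Type*} [MeasurableSpace α] (P : Measure α) [IsProbabilityMeasure P]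
    (Y : α → Fin p → ℝ) (hYmeas : Measurable Y)
    (hY : ∀ A : Set (Fin p → ℝ), MeasurableSet A →
      (P (Y ⁻¹' A)).toReal = ∫ x in A, esnPDF μ S hS l 0 x)
    (Δ : Fin p → ℝ)
    (hΔ : Δ = (Real.sqrt (1 + dotProduct l l))⁻¹ • (psdSqrt hS.posSemidef *ᵥ l))
    (Ωmat : Matrix (Fin p ⊕ Unit) (Fin p ⊕ Unit) ℝ)
    (hΩ : Ωmat = Matrix.fromBlocks S (Matrix.of fun i (_ : Unit) => -Δ i)
      (Matrix.of fun (_ : Unit) j => -Δ j) 1)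
    (y : Fin p → ℝ) :
    (P {ω | ∀ i, Y ω i ≤ y i}).toReal =
      2 * ∫ x in {x : (Fin p ⊕ Unit) → ℝ |
            ∀ j, x j ≤ Sum.elim y (fun _ => (0 : ℝ)) j},
          mvnPDF (Sum.elim μ (fun _ => (0 : ℝ))) Ωmat x := by
  classical
  set R := psdSqrt hS.posSemidef with hRdef
  have hc : (0:ℝ) < 1 + l ⬝ᵥ l :=
    lt_of_lt_of_le one_pos (le_add_of_nonneg_right (dot_self_nonneg' l))
  set v : ℝ≥0 := ⟨(1 + l ⬝ᵥ l)⁻¹, inv_nonneg.mpr (add_nonneg zero_le_one (dot_self_nonneg' l))⟩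
    with hvdef
  have hv0 : v ≠ 0 := by
    intro h
    have : ((v:ℝ)) = 0 := by rw [h]; rfl
    rw [hvdef] at this
    exact (inv_ne_zero hc.ne') this
  set ν : (Fin p ⊕ Unit) → ℝ := Sum.elim μ (fun _ : Unit => (0:ℝ)) with hνdef
  set A : Set (Fin p → ℝ) := {x | ∀ i, x i ≤ y i} with hAdef
  set B : Set ((Fin p ⊕ Unit) → ℝ) :=
    {x | ∀ j, x j ≤ Sum.elim y (fun _ => (0 : ℝ)) j} with hBdef
  have hAmeas : MeasurableSet A := by
    have : A = ⋂ i, {x : Fin p → ℝ | x i ≤ y i} := by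
      ext z; simp [hAdef, Set.mem_iInter]
    rw [this]
    exact MeasurableSet.iInter fun i =>
      measurableSet_le (measurable_pi_apply i) measurable_const
  have hBmeas : MeasurableSet B := by
    have : B = ⋂ j, {x : (Fin p ⊕ Unit) → ℝ | x j ≤ Sum.elim y (fun _ => (0:ℝ)) j} := by
      ext z; simp [hBdef, Set.mem_iInter]
    rw [this]
    exact MeasurableSet.iInter fun j =>
      measurableSet_le (measurable_pi_apply j) measurable_const
  -- density facts
  have hfact : ∀ (x : Fin p → ℝ) (t : ℝ),
      mvnPDF ν Ωmat (Sum.elim x fun _ : Unit => t) =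
        mvnPDF μ S x * gaussianPDFReal
          (-((Real.sqrt (1 + l ⬝ᵥ l))⁻¹ * (l ⬝ᵥ (R⁻¹ *ᵥ (x - μ))))) v t := by
    intro x t
    exact sn_density_eq μ S hS l Δ hΔ Ωmat hΩ x t
  have hmvnS_nonneg : ∀ x, 0 ≤ mvnPDF μ S x := mvnPDF_nonneg μ S hS.det_pos.le
  have helim : ∀ z : (Fin p ⊕ Unit) → ℝ,
      z = Sum.elim (fun i => z (Sum.inl i)) (fun _ : Unit => z (Sum.inr ())) := by
    intro z; funext j
    cases j with
    | inl i => rfl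
    | inr u => cases u; rfl
  have hmvnΩ_nonneg : ∀ z, 0 ≤ mvnPDF ν Ωmat z := by
    intro z
    rw [helim z, hfact]
    exact mul_nonneg (hmvnS_nonneg _) (gaussianPDFReal_nonneg _ _ _)
  have hmvnΩ_meas : Measurable (mvnPDF ν Ωmat) := mvnPDF_measurable ν Ωmat
  have hmvnS_meas : Measurable (mvnPDF μ S) := mvnPDF_measurable μ S
  have hgm : Measurable (fun x : Fin p → ℝ => 0 + l ⬝ᵥ (R⁻¹ *ᵥ (x - μ))) := by
    apply measurable_const.add
    simp only [dotProduct, Matrix.mulVec, Pi.sub_apply]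
    exact Finset.measurable_sum _ fun i _ =>
      measurable_const.mul (Finset.measurable_sum _ fun j _ =>
        measurable_const.mul ((measurable_pi_apply j).sub measurable_const))
  have hesn_meas : Measurable (esnPDF μ S hS l 0) := by
    unfold esnPDF
    exact (measurable_const.mul hmvnS_meas).mul (stdCDF_measurable.comp hgm)
  have hesn_nonneg : ∀ x, 0 ≤ esnPDF μ S hS l 0 x := by
    intro x
    unfold esnPDF
    exact mul_nonneg (mul_nonneg (inv_nonneg.mpr (stdCDF_nonneg _)) (hmvnS_nonneg _))
      (stdCDF_nonneg _)
  -- pointwise identity in ℝ≥0∞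
  have hpoint : ∀ x : Fin p → ℝ, ENNReal.ofReal (esnPDF μ S hS l 0 x) =
      2 * ∫⁻ t in Set.Iic (0:ℝ), ENNReal.ofReal (mvnPDF ν Ωmat (glueE p (x, t))) := by
    intro x
    have h1 : ∀ t : ℝ, ENNReal.ofReal (mvnPDF ν Ωmat (glueE p (x, t))) =
        ENNReal.ofReal (mvnPDF μ S x) *
          gaussianPDF (-((Real.sqrt (1 + l ⬝ᵥ l))⁻¹ * (l ⬝ᵥ (R⁻¹ *ᵥ (x - μ))))) v t := by
      intro t
      rw [glueE_apply, hfact, ENNReal.ofReal_mul (hmvnS_nonneg x)]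
      rfl
    simp_rw [h1]
    rw [lintegral_const_mul' _ _ ENNReal.ofReal_ne_top,
      lintegral_Iic_zero_gaussian _ v hv0]
    have hsv : Real.sqrt (v:ℝ) = (Real.sqrt (1 + l ⬝ᵥ l))⁻¹ := by
      rw [hvdef]
      exact Real.sqrt_inv _
    have harg : -(-((Real.sqrt (1 + l ⬝ᵥ l))⁻¹ * (l ⬝ᵥ (R⁻¹ *ᵥ (x - μ))))) / Real.sqrt (v:ℝ)
        = 0 + l ⬝ᵥ (R⁻¹ *ᵥ (x - μ)) := by
      have hsc : Real.sqrt (1 + l ⬝ᵥ l) ≠ 0 := (Real.sqrt_pos.mpr hc).ne'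
      rw [hsv, neg_neg, zero_add]
      field_simp
    rw [harg]
    unfold esnPDF
    rw [zero_div, stdCDF_zero, inv_inv]
    rw [mul_assoc, ENNReal.ofReal_mul (by norm_num),
      ENNReal.ofReal_mul (hmvnS_nonneg x)]
    norm_num
    rfl
  -- sets correspondence
  have hBpre : (glueE p) ⁻¹' B = A ×ˢ Set.Iic (0:ℝ) := by
    ext q
    obtain ⟨x, t⟩ := q
    simp only [Set.mem_preimage, hBdef, Set.mem_setOf_eq, glueE_apply, Set.mem_prod, hAdef,
      Set.mem_Iic, Sum.forall]
    constructor
    · rintro ⟨h1, h2⟩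
      exact ⟨h1, h2 ()⟩
    · rintro ⟨h1, h2⟩
      exact ⟨h1, fun _ => h2⟩
  -- main ENNReal computation
  have key : ∫⁻ x in A, ENNReal.ofReal (esnPDF μ S hS l 0 x) =
      2 * ∫⁻ z in B, ENNReal.ofReal (mvnPDF ν Ωmat z) := by
    have hGm : Measurable fun q : (Fin p → ℝ) × ℝ =>
        ENNReal.ofReal (mvnPDF ν Ωmat (glueE p q)) :=
      (hmvnΩ_meas.comp (glueE p).measurable).ennreal_ofReal
    calc ∫⁻ x in A, ENNReal.ofReal (esnPDF μ S hS l 0 x)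
        = ∫⁻ x in A, 2 * ∫⁻ t in Set.Iic (0:ℝ),
            ENNReal.ofReal (mvnPDF ν Ωmat (glueE p (x, t))) := by
          exact lintegral_congr fun x => hpoint x
      _ = 2 * ∫⁻ x in A, ∫⁻ t in Set.Iic (0:ℝ),
            ENNReal.ofReal (mvnPDF ν Ωmat (glueE p (x, t))) := by
          rw [lintegral_const_mul' _ _ (by norm_num)]
      _ = 2 * ∫⁻ q in A ×ˢ Set.Iic (0:ℝ),
            ENNReal.ofReal (mvnPDF ν Ωmat (glueE p q)) := by
          congr 1
          rw [Measure.volume_eq_prod, ← Measure.prod_restrict,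
            lintegral_prod _ hGm.aemeasurable]
      _ = 2 * ∫⁻ z in B, ENNReal.ofReal (mvnPDF ν Ωmat z) := by
          congr 1
          rw [← hBpre]
          exact (glueE_mp p).setLIntegral_comp_preimage_emb
            (glueE p).measurableEmbedding (fun z => ENNReal.ofReal (mvnPDF ν Ωmat z)) B
  -- finish
  have hset : {ω | ∀ i, Y ω i ≤ y i} = Y ⁻¹' A := rfl
  rw [hset, hY A hAmeas]
  rw [integral_eq_lintegral_of_nonneg_ae (ae_of_all _ hesn_nonneg)
    hesn_meas.aestronglyMeasurable]
  rw [integral_eq_lintegral_of_nonneg_ae (ae_of_all _ hmvnΩ_nonneg)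
    hmvnΩ_meas.aestronglyMeasurable]
  rw [key, ENNReal.toReal_mul]
  norm_num
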